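/- Let (X_n) be a time-homogeneous Markov chain on a countable state space S such that the distribution of X_n converges (in total variation) to a fixed distribution π irrespective of the starting distribution. Suppose that for some α ∈ (0,1] and some n ∈ ℕ, for each pair of states x, y ∈ S there exists a coupling ((X_m, Y_m))_{m∈ℕ₀} of two copies of the chain started at x and y respectively whose first meeting time τ satisfies P(τ ≤ n) ≥ α. Then the mixing time satisfies t_mix ≤ n·⌈log(1/4)/log(1 − α/2)⌉. -/

import Mathlib

open MeasureTheory Filter Topology
open scoped ENNReal

/-- The distribution at time `n` of the time-homogeneous Markov chain with transition
kernel `K` started at `x`, i.e. `P^n(x, ·)`. -/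
noncomputable def stepDist {S : Type*} (K : S → PMF S) (x : S) : ℕ → PMF S
  | 0 => PMF.pure x
  | n + 1 => (stepDist K x n).bind K

/-- Total variation distance between two probability distributions on a countable space:
`sup_{A ⊆ S} |μ(A) − ν(A)|`. -/
noncomputable def tvDist {S : Type*} (μ ν : PMF S) : ℝ :=
  ⨆ A : Set S, |(∑' a : A, μ ↑a).toReal - (∑' a : A, ν ↑a).toReal|

open Classical in
/-- `X` is a copy, on the probability space `(Ω, Pr)`, of the time-homogeneous Markov chain
with transition kernel `K` started at `x`: all finite-dimensional distributions are the
ones prescribed by `x` and `K`. -/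
def IsCopy {S Ω : Type*} [MeasurableSpace Ω] (Pr : Measure Ω)
    (K : S → PMF S) (x : S) (X : ℕ → Ω → S) : Prop :=
  ∀ n : ℕ, ∀ path : ℕ → S,
    Pr {ω | ∀ i ≤ n, X i ω = path i}
      = (if path 0 = x then (1 : ℝ≥0∞) else 0) *
        ∏ i ∈ Finset.range n, K (path i) (path (i + 1))

/-- The distribution at time `n` of the Markov chain with kernel `K` started from the
initial distribution `μ`. -/
noncomputable def stepDistFrom {S : Type*} (K : S → PMF S) (μ : PMF S) : ℕ → PMF S
  | 0 => μ
  | n + 1 => (stepDistFrom K μ n).bind K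

namespace MixAux

variable {S : Type*}

noncomputable def pmOf (μ : PMF S) (A : Set S) : ℝ≥0∞ := ∑' a : A, μ ↑a

lemma tvDist_eq_isup (μ ν : PMF S) :
    tvDist μ ν = ⨆ A : Set S, |(pmOf μ A).toReal - (pmOf ν A).toReal| := rfl

lemma tsum_sub_le (f : S → ℝ≥0∞) (A : Set S) : (∑' a : A, f ↑a) ≤ ∑' s, f s := by
  rw [tsum_subtype A f]
  exact ENNReal.tsum_le_tsum fun s => Set.indicator_le_self _ _ s

lemma pmOf_le_one (μ : PMF S) (A : Set S) : pmOf μ A ≤ 1 := by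
  rw [pmOf, tsum_subtype]
  calc ∑' a, A.indicator (fun a => μ a) a ≤ ∑' a, μ a :=
        ENNReal.tsum_le_tsum (fun a => Set.indicator_le_self _ _ a)
    _ = 1 := μ.tsum_coe

lemma pmOf_ne_top (μ : PMF S) (A : Set S) : pmOf μ A ≠ ⊤ :=
  ne_top_of_le_ne_top ENNReal.one_ne_top (pmOf_le_one μ A)

lemma pmOf_toReal_nonneg (μ : PMF S) (A : Set S) : 0 ≤ (pmOf μ A).toReal :=
  ENNReal.toReal_nonneg

lemma pmOf_toReal_le_one (μ : PMF S) (A : Set S) : (pmOf μ A).toReal ≤ 1 := by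
  have := ENNReal.toReal_mono ENNReal.one_ne_top (pmOf_le_one μ A)
  simpa using this

lemma abs_pm_le_one (μ ν : PMF S) (A : Set S) :
    |(pmOf μ A).toReal - (pmOf ν A).toReal| ≤ 1 := by
  rw [abs_le]
  constructor <;> nlinarith [pmOf_toReal_nonneg μ A, pmOf_toReal_le_one μ A,
    pmOf_toReal_nonneg ν A, pmOf_toReal_le_one ν A]

lemma bdd_tv (μ ν : PMF S) :
    BddAbove (Set.range fun A : Set S => |(pmOf μ A).toReal - (pmOf ν A).toReal|) := by
  refine ⟨1, ?_⟩
  rintro r ⟨A, rfl⟩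
  exact abs_pm_le_one μ ν A

lemma le_tvDist (μ ν : PMF S) (A : Set S) :
    |(pmOf μ A).toReal - (pmOf ν A).toReal| ≤ tvDist μ ν := by
  rw [tvDist_eq_isup]
  exact le_ciSup (bdd_tv μ ν) A

lemma tvDist_le (μ ν : PMF S) {c : ℝ} (hc : 0 ≤ c)
    (h : ∀ A : Set S, |(pmOf μ A).toReal - (pmOf ν A).toReal| ≤ c) : tvDist μ ν ≤ c := by
  rw [tvDist_eq_isup]
  exact Real.iSup_le h hc

lemma tvDist_nonneg (μ ν : PMF S) : 0 ≤ tvDist μ ν := by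
  rw [tvDist_eq_isup]
  exact Real.iSup_nonneg fun A => abs_nonneg _

lemma tvDist_le_one (μ ν : PMF S) : tvDist μ ν ≤ 1 :=
  tvDist_le μ ν zero_le_one (abs_pm_le_one μ ν)

lemma tvDist_symm (μ ν : PMF S) : tvDist μ ν = tvDist ν μ := by
  rw [tvDist_eq_isup, tvDist_eq_isup]
  congr 1; funext A; exact abs_sub_comm _ _

lemma tvDist_triangle (μ ν κ : PMF S) : tvDist μ κ ≤ tvDist μ ν + tvDist ν κ := by
  refine tvDist_le μ κ (add_nonneg (tvDist_nonneg μ ν) (tvDist_nonneg ν κ)) ?_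
  intro A
  calc |(pmOf μ A).toReal - (pmOf κ A).toReal|
      ≤ |(pmOf μ A).toReal - (pmOf ν A).toReal| + |(pmOf ν A).toReal - (pmOf κ A).toReal| :=
        abs_sub_le _ _ _
    _ ≤ tvDist μ ν + tvDist ν κ := add_le_add (le_tvDist μ ν A) (le_tvDist ν κ A)

lemma pmOf_singleton (μ : PMF S) (s : S) : pmOf μ {s} = μ s := tsum_singleton s (fun a => μ a)

lemma tvDist_eq_zero {μ ν : PMF S} (h : tvDist μ ν = 0) : μ = ν := by
  apply PMF.ext
  intro s
  have h1 := le_tvDist μ ν {s}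
  rw [h, pmOf_singleton, pmOf_singleton, abs_nonpos_iff, sub_eq_zero] at h1
  have := ENNReal.toReal_eq_toReal_iff' (PMF.apply_ne_top μ s) (PMF.apply_ne_top ν s)
  exact this.mp h1

-- ℓ¹ characterization
lemma excess_add (μ ν : PMF S) (s : S) : μ s + (ν s - μ s) = ν s + (μ s - ν s) := by
  rcases le_total (μ s) (ν s) with h | h
  · rw [add_tsub_cancel_of_le h, tsub_eq_zero_of_le h, add_zero]
  · rw [tsub_eq_zero_of_le h, add_zero, add_tsub_cancel_of_le h]

lemma sum_excess_le_one (μ ν : PMF S) : (∑' s, (μ s - ν s)) ≤ 1 := by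
  calc (∑' s, (μ s - ν s)) ≤ ∑' s, μ s := ENNReal.tsum_le_tsum fun s => tsub_le_self
    _ = 1 := μ.tsum_coe

lemma sum_excess_ne_top (μ ν : PMF S) : (∑' s, (μ s - ν s)) ≠ ⊤ :=
  ne_top_of_le_ne_top ENNReal.one_ne_top (sum_excess_le_one μ ν)

lemma sum_excess_symm (μ ν : PMF S) : (∑' s, (μ s - ν s)) = ∑' s, (ν s - μ s) := by
  have key : (1 : ℝ≥0∞) + ∑' s, (ν s - μ s) = 1 + ∑' s, (μ s - ν s) := by
    calc (1 : ℝ≥0∞) + ∑' s, (ν s - μ s) = ∑' s, (μ s + (ν s - μ s)) := by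
          rw [ENNReal.tsum_add, μ.tsum_coe]
      _ = ∑' s, (ν s + (μ s - ν s)) := by
          exact tsum_congr fun s => excess_add μ ν s
      _ = 1 + ∑' s, (μ s - ν s) := by rw [ENNReal.tsum_add, ν.tsum_coe]
  exact ((ENNReal.add_right_inj ENNReal.one_ne_top).mp key).symm

lemma pmOf_le_add_excess (μ ν : PMF S) (A : Set S) :
    pmOf μ A ≤ pmOf ν A + ∑' s, (μ s - ν s) := by
  rw [pmOf, pmOf]
  calc (∑' a : A, μ ↑a) ≤ ∑' a : A, (ν ↑a + (μ ↑a - ν ↑a)) :=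
        ENNReal.tsum_le_tsum fun a => le_tsub_add.trans (by rw [add_comm])
    _ = (∑' a : A, ν ↑a) + ∑' a : A, (μ ↑a - ν ↑a) := ENNReal.tsum_add
    _ ≤ (∑' a : A, ν ↑a) + ∑' s, (μ s - ν s) := by
        gcongr
        exact tsum_sub_le (fun s => μ s - ν s) A

lemma tvDist_eq_sum_excess (μ ν : PMF S) :
    tvDist μ ν = (∑' s, (μ s - ν s)).toReal := by
  apply le_antisymm
  · refine tvDist_le μ ν ENNReal.toReal_nonneg ?_
    intro A
    rw [abs_le]
    constructor
    · have h1 := pmOf_le_add_excess ν μ A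
      have := ENNReal.toReal_mono (by
        exact ENNReal.add_ne_top.mpr ⟨pmOf_ne_top μ A, sum_excess_ne_top ν μ⟩) h1
      rw [ENNReal.toReal_add (pmOf_ne_top μ A) (sum_excess_ne_top ν μ)] at this
      rw [sum_excess_symm ν μ] at this
      linarith
    · have h1 := pmOf_le_add_excess μ ν A
      have := ENNReal.toReal_mono (by
        exact ENNReal.add_ne_top.mpr ⟨pmOf_ne_top ν A, sum_excess_ne_top μ ν⟩) h1
      rw [ENNReal.toReal_add (pmOf_ne_top ν A) (sum_excess_ne_top μ ν)] at this
      linarith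
  · set A : Set S := {s | ν s < μ s} with hA
    have hsupp : Function.support (fun s => μ s - ν s) ⊆ A := by
      intro s hs
      simp only [Function.mem_support] at hs
      have : ν s < μ s := by
        by_contra hc
        exact hs (tsub_eq_zero_of_le (not_lt.mp hc))
      exact this
    have hAsum : (∑' a : A, (μ ↑a - ν ↑a)) = ∑' s, (μ s - ν s) :=
      tsum_subtype_eq_of_support_subset hsupp
    have hsplit : pmOf μ A = pmOf ν A + ∑' s, (μ s - ν s) := by
      rw [pmOf, pmOf, ← hAsum, ← ENNReal.tsum_add]
      refine tsum_congr fun a => ?_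
      have : ν ↑a ≤ μ ↑a := le_of_lt a.2
      rw [add_tsub_cancel_of_le this]
    have := le_tvDist μ ν A
    rw [hsplit, ENNReal.toReal_add (pmOf_ne_top ν A) (sum_excess_ne_top μ ν)] at this
    rw [abs_of_nonneg (by linarith [ENNReal.toReal_nonneg (a := ∑' s, (μ s - ν s))] )] at this
    linarith

-- step distribution algebra
variable {S : Type*}

lemma stepDist_eq_from (K : S → PMF S) (x : S) (m : ℕ) :
    stepDist K x m = stepDistFrom K (PMF.pure x) m := by
  induction m with
  | zero => rfl
  | succ m ih => rw [stepDist, stepDistFrom, ih]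

lemma stepDistFrom_add (K : S → PMF S) (μ : PMF S) (a b : ℕ) :
    stepDistFrom K μ (a + b) = stepDistFrom K (stepDistFrom K μ a) b := by
  induction b with
  | zero => rfl
  | succ b ih => rw [← Nat.add_assoc, stepDistFrom, stepDistFrom, ih]

lemma stepDist_succ_front (K : S → PMF S) (x : S) (m : ℕ) :
    stepDist K x (m + 1) = (K x).bind (fun s => stepDist K s m) := by
  induction m with
  | zero =>
      rw [stepDist, stepDist]
      simp only [PMF.pure_bind]
      exact (PMF.bind_pure (K x)).symm
  | succ m ih =>
      rw [stepDist, ih, PMF.bind_bind]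
      rfl

lemma stepDistFrom_eq_bind (K : S → PMF S) (μ : PMF S) (m : ℕ) :
    stepDistFrom K μ m = μ.bind (fun s => stepDist K s m) := by
  induction m with
  | zero =>
      rw [stepDistFrom]
      exact (PMF.bind_pure μ).symm
  | succ m ih =>
      rw [stepDistFrom, ih, PMF.bind_bind]
      apply congrArg
      funext s
      rw [stepDist]

lemma pmOf_bind (μ : PMF S) (g : S → PMF S) (A : Set S) :
    pmOf (μ.bind g) A = ∑' s, μ s * pmOf (g s) A := by
  rw [pmOf]
  have h1 : ∀ a : A, (μ.bind g) ↑a = ∑' s, μ s * g s ↑a := fun a => PMF.bind_apply _ _ _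
  calc (∑' a : A, (μ.bind g) ↑a) = ∑' (a : A) (s : S), μ s * g s ↑a := tsum_congr h1
    _ = ∑' (s : S) (a : A), μ s * g s ↑a := ENNReal.tsum_comm
    _ = ∑' s, μ s * pmOf (g s) A := tsum_congr fun s => ENNReal.tsum_mul_left

lemma contract_aux (K : S → PMF S) (N : ℕ) (β : ℝ) (hβ : 0 ≤ β)
    (hpair : ∀ s t : S, tvDist (stepDist K s N) (stepDist K t N) ≤ β)
    (μ ν : PMF S) (A : Set S) :
    (pmOf (stepDistFrom K μ N) A).toReal - (pmOf (stepDistFrom K ν N) A).toReal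
      ≤ β * tvDist μ ν := by
  set e : S → ℝ≥0∞ := fun s => μ s - ν s with he
  set f : S → ℝ≥0∞ := fun s => ν s - μ s with hf
  set t : ℝ≥0∞ := ∑' s, e s with ht
  have htf : (∑' s, f s) = t := (sum_excess_symm μ ν).symm
  have htv : tvDist μ ν = t.toReal := tvDist_eq_sum_excess μ ν
  have ht_top : t ≠ ⊤ := sum_excess_ne_top μ ν
  rcases eq_or_ne t 0 with h0 | h0
  · have hμν : μ = ν := tvDist_eq_zero (by rw [htv, h0]; simp)
    rw [hμν, sub_self]
    exact mul_nonneg hβ (tvDist_nonneg _ _)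
  · set F : S → ℝ≥0∞ := fun s => pmOf (stepDist K s N) A with hF
    have hF1 : ∀ s, F s ≤ 1 := fun s => pmOf_le_one _ _
    have hFt : ∀ s, F s ≠ ⊤ := fun s => pmOf_ne_top _ _
    have hμ : pmOf (stepDistFrom K μ N) A = ∑' s, μ s * F s := by
      rw [stepDistFrom_eq_bind, pmOf_bind]
    have hν : pmOf (stepDistFrom K ν N) A = ∑' s, ν s * F s := by
      rw [stepDistFrom_eq_bind, pmOf_bind]
    have hdom : ∀ (c : S → ℝ≥0∞), (∑' s, c s * F s) ≤ ∑' s, c s := by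
      intro c
      refine ENNReal.tsum_le_tsum fun s => ?_
      calc c s * F s ≤ c s * 1 := mul_le_mul_right (hF1 s) _
        _ = c s := mul_one _
    have hμF_top : (∑' s, μ s * F s) ≠ ⊤ :=
      ne_top_of_le_ne_top ENNReal.one_ne_top ((hdom _).trans_eq μ.tsum_coe)
    have hνF_top : (∑' s, ν s * F s) ≠ ⊤ :=
      ne_top_of_le_ne_top ENNReal.one_ne_top ((hdom _).trans_eq ν.tsum_coe)
    have heF_top : (∑' s, e s * F s) ≠ ⊤ :=
      ne_top_of_le_ne_top ht_top (hdom e)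
    have hfF_top : (∑' s, f s * F s) ≠ ⊤ :=
      ne_top_of_le_ne_top (htf ▸ ht_top) (hdom f)
    have key : (∑' s, μ s * F s) + (∑' s, f s * F s)
        = (∑' s, ν s * F s) + (∑' s, e s * F s) := by
      rw [← ENNReal.tsum_add, ← ENNReal.tsum_add]
      refine tsum_congr fun s => ?_
      rw [← add_mul, ← add_mul]
      exact congrArg (· * F s) (excess_add μ ν s)
    have hpoint : ∀ s u, e s * f u * F s ≤ e s * f u * (F u + ENNReal.ofReal β) := by
      intro s u
      rcases eq_or_ne s u with rfl | hsu
      · have hz : e s * f s = 0 := by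
          rcases le_total (μ s) (ν s) with h | h
          · have : e s = 0 := tsub_eq_zero_of_le h
            rw [this, zero_mul]
          · have : f s = 0 := tsub_eq_zero_of_le h
            rw [this, mul_zero]
        rw [hz, zero_mul, zero_mul]
      · have h1 : |(F s).toReal - (F u).toReal| ≤ β :=
          le_trans (le_tvDist _ _ A) (hpair s u)
        have h2 : (F s).toReal ≤ (F u).toReal + β := by
          have := (abs_le.mp h1).2; linarith
        have h3 : F s ≤ F u + ENNReal.ofReal β := by
          calc F s = ENNReal.ofReal (F s).toReal := (ENNReal.ofReal_toReal (hFt s)).symm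
            _ ≤ ENNReal.ofReal ((F u).toReal + β) := ENNReal.ofReal_le_ofReal h2
            _ = ENNReal.ofReal (F u).toReal + ENNReal.ofReal β :=
                ENNReal.ofReal_add ENNReal.toReal_nonneg hβ
            _ = F u + ENNReal.ofReal β := by rw [ENNReal.ofReal_toReal (hFt u)]
        exact mul_le_mul_right h3 _
    have hdouble : (∑' s, e s * F s) * t
        ≤ ((∑' u, f u * F u) + ENNReal.ofReal β * t) * t := by
      calc (∑' s, e s * F s) * t
          = ∑' s, e s * F s * t := ENNReal.tsum_mul_right.symm
        _ = ∑' s, ∑' u, e s * f u * F s := by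
            refine tsum_congr fun s => ?_
            calc e s * F s * t = ∑' u, e s * F s * f u := by
                  rw [← htf]
                  exact ENNReal.tsum_mul_left.symm
              _ = ∑' u, e s * f u * F s := tsum_congr fun u => by ring
        _ ≤ ∑' s, ∑' u, e s * f u * (F u + ENNReal.ofReal β) :=
            ENNReal.tsum_le_tsum fun s => ENNReal.tsum_le_tsum fun u => hpoint s u
        _ = ((∑' u, f u * F u) + ENNReal.ofReal β * t) * t := by
            have inner : ∀ s, (∑' u, e s * f u * (F u + ENNReal.ofReal β))
                = e s * ((∑' u, f u * F u) + ENNReal.ofReal β * t) := by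
              intro s
              calc (∑' u, e s * f u * (F u + ENNReal.ofReal β))
                  = ∑' u, (e s * (f u * F u) + (e s * ENNReal.ofReal β) * f u) :=
                    tsum_congr fun u => by ring
                _ = (∑' u, e s * (f u * F u)) + ∑' u, (e s * ENNReal.ofReal β) * f u :=
                    ENNReal.tsum_add
                _ = e s * (∑' u, f u * F u) + (e s * ENNReal.ofReal β) * ∑' u, f u := by
                    rw [ENNReal.tsum_mul_left, ENNReal.tsum_mul_left]
                _ = e s * ((∑' u, f u * F u) + ENNReal.ofReal β * t) := by
                    rw [htf]; ring
            calc (∑' s, ∑' u, e s * f u * (F u + ENNReal.ofReal β))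
                = ∑' s, e s * ((∑' u, f u * F u) + ENNReal.ofReal β * t) :=
                  tsum_congr inner
              _ = ((∑' u, f u * F u) + ENNReal.ofReal β * t) * t := by
                  rw [ENNReal.tsum_mul_right, ← ht, mul_comm]
    have hfin : (∑' s, e s * F s) ≤ (∑' u, f u * F u) + ENNReal.ofReal β * t :=
      (ENNReal.mul_le_mul_iff_left h0 ht_top).mp hdouble
    have keyR : (∑' s, μ s * F s).toReal + (∑' s, f s * F s).toReal
        = (∑' s, ν s * F s).toReal + (∑' s, e s * F s).toReal := by
      rw [← ENNReal.toReal_add hμF_top hfF_top, ← ENNReal.toReal_add hνF_top heF_top, key]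
    have hfinR : (∑' s, e s * F s).toReal ≤ (∑' s, f s * F s).toReal + β * t.toReal := by
      have h4 : ((∑' u, f u * F u) + ENNReal.ofReal β * t).toReal
          = (∑' s, f s * F s).toReal + β * t.toReal := by
        rw [ENNReal.toReal_add hfF_top (ENNReal.mul_ne_top ENNReal.ofReal_ne_top ht_top),
          ENNReal.toReal_mul, ENNReal.toReal_ofReal hβ]
      have := ENNReal.toReal_mono (by
        exact ENNReal.add_ne_top.mpr ⟨hfF_top, ENNReal.mul_ne_top ENNReal.ofReal_ne_top ht_top⟩) hfin
      rw [h4] at this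
      exact this
    rw [hμ, hν, htv]
    linarith

lemma contract (K : S → PMF S) (N : ℕ) (β : ℝ) (hβ : 0 ≤ β)
    (hpair : ∀ s t : S, tvDist (stepDist K s N) (stepDist K t N) ≤ β)
    (μ ν : PMF S) :
    tvDist (stepDistFrom K μ N) (stepDistFrom K ν N) ≤ β * tvDist μ ν := by
  have hb : 0 ≤ β * tvDist μ ν := mul_nonneg hβ (tvDist_nonneg μ ν)
  refine tvDist_le _ _ hb fun A => abs_le.mpr ⟨?_, contract_aux K N β hβ hpair μ ν A⟩
  have h := contract_aux K N β hβ hpair ν μ A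
  rw [tvDist_symm ν μ] at h
  linarith

section Paths

open Classical in
noncomputable def pI (P : Prop) : ℝ≥0∞ := if P then 1 else 0

lemma pI_congr {P Q : Prop} (h : P ↔ Q) : pI P = pI Q := by
  unfold pI
  by_cases hp : P
  · rw [if_pos hp, if_pos (h.mp hp)]
  · rw [if_neg hp, if_neg (fun hq => hp (h.mpr hq))]

lemma pI_le_one (P : Prop) : pI P ≤ 1 := by
  unfold pI; split <;> simp

lemma pI_true {P : Prop} (h : P) : pI P = 1 := by unfold pI; rw [if_pos h]

lemma pI_false {P : Prop} (h : ¬ P) : pI P = 0 := by unfold pI; rw [if_neg h]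

variable (K : S → PMF S)

open Classical in
noncomputable def W : (N : ℕ) → S → (Fin (N+1) → S) → ℝ≥0∞ := fun N x p =>
  pI (p 0 = x) * ∏ i : Fin N, K (p i.castSucc) (p i.succ)

lemma W_off {N : ℕ} {x : S} {p : Fin (N+1) → S} (h : p 0 ≠ x) : W K N x p = 0 := by
  unfold W; rw [pI_false h, zero_mul]

lemma W_start (N : ℕ) (x : S) (q : Fin (N+1) → S) :
    W K N x q = pI (q 0 = x) * W K N (q 0) q := by
  unfold W
  rw [pI_true rfl, one_mul]

lemma W_succ (N : ℕ) (x z : S) (q : Fin (N+1) → S) :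
    W K (N+1) x (Fin.cons z q) = pI (z = x) * (K z (q 0) * W K N (q 0) q) := by
  unfold W
  rw [Fin.prod_univ_succ]
  have hterm : ∀ i : Fin N,
      K ((Fin.cons z q : Fin (N+2) → S) i.succ.castSucc)
        ((Fin.cons z q : Fin (N+2) → S) i.succ.succ)
      = K (q i.castSucc) (q i.succ) := by
    intro i
    rw [← Fin.succ_castSucc, Fin.cons_succ, Fin.cons_succ]
  rw [Finset.prod_congr rfl (fun i _ => hterm i)]
  have h0 : ((Fin.cons z q : Fin (N+2) → S) (Fin.castSucc 0)) = z := by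
    rw [Fin.castSucc_zero, Fin.cons_zero]
  have h1 : ((Fin.cons z q : Fin (N+2) → S) (Fin.succ 0)) = q 0 := by simp
  rw [h0, h1, Fin.cons_zero, pI_true rfl, one_mul]

lemma K_mul_W (N : ℕ) (x : S) (q : Fin (N+1) → S) :
    (∑' s, K x s * W K N s q) = K x (q 0) * W K N (q 0) q :=
  tsum_eq_single (q 0) (fun s hs => by rw [W_off K (fun h => hs h.symm), mul_zero])

lemma tsum_path_succ (N : ℕ) (x : S) (G : (Fin (N+2) → S) → ℝ≥0∞) :
    ∑' p : Fin (N+2) → S, W K (N+1) x p * G p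
      = ∑' s : S, K x s * ∑' q : Fin (N+1) → S, W K N s q * G (Fin.cons x q) := by
  calc ∑' p : Fin (N+2) → S, W K (N+1) x p * G p
      = ∑' zq : S × (Fin (N+1) → S),
          W K (N+1) x ((Fin.consEquiv (fun _ : Fin (N+2) => S)) zq)
            * G ((Fin.consEquiv (fun _ : Fin (N+2) => S)) zq) :=
        ((Fin.consEquiv (fun _ : Fin (N+2) => S)).tsum_eq
          fun p => W K (N+1) x p * G p).symm
    _ = ∑' (z : S) (q : Fin (N+1) → S), W K (N+1) x (Fin.cons z q) * G (Fin.cons z q) := by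
        exact ENNReal.tsum_prod'
    _ = ∑' (z : S) (q : Fin (N+1) → S),
          pI (z = x) * (K z (q 0) * W K N (q 0) q * G (Fin.cons z q)) := by
        refine tsum_congr fun z => tsum_congr fun q => ?_
        rw [W_succ]; ring
    _ = ∑' q : Fin (N+1) → S, K x (q 0) * W K N (q 0) q * G (Fin.cons x q) := by
        have hz : ∀ z, z ≠ x →
            (∑' q : Fin (N+1) → S,
              pI (z = x) * (K z (q 0) * W K N (q 0) q * G (Fin.cons z q))) = 0 := by
          intro z hz
          simp only [pI_false (show ¬ z = x from hz), zero_mul, tsum_zero]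
        rw [tsum_eq_single x hz]
        exact tsum_congr fun q => by rw [pI_true rfl, one_mul]
    _ = ∑' (q : Fin (N+1) → S) (s : S), K x s * W K N s q * G (Fin.cons x q) := by
        refine tsum_congr fun q => ?_
        rw [← K_mul_W K N x q]
        exact ENNReal.tsum_mul_right.symm
    _ = ∑' (s : S) (q : Fin (N+1) → S), K x s * W K N s q * G (Fin.cons x q) :=
        ENNReal.tsum_comm
    _ = ∑' s : S, K x s * ∑' q : Fin (N+1) → S, W K N s q * G (Fin.cons x q) := by
        refine tsum_congr fun s => ?_
        rw [← ENNReal.tsum_mul_left]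
        exact tsum_congr fun q => by ring

lemma sumW : ∀ (N : ℕ) (x : S), ∑' p : Fin (N+1) → S, W K N x p = 1 := by
  intro N
  induction N with
  | zero =>
      intro x
      have h0 : ∀ s : S, W K 0 x (fun _ : Fin 1 => s) = pI (s = x) := by
        intro s
        unfold W
        rw [Fin.prod_univ_zero, mul_one]
      calc ∑' p : Fin 1 → S, W K 0 x p
          = ∑' s : S, W K 0 x ((Equiv.funUnique (Fin 1) S).symm s) :=
            ((Equiv.funUnique (Fin 1) S).symm.tsum_eq fun p => W K 0 x p).symm
        _ = ∑' s : S, pI (s = x) := tsum_congr fun s => h0 s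
        _ = 1 := by
            rw [tsum_eq_single x (fun s hs => pI_false hs)]
            exact pI_true rfl
  | succ N ih =>
      intro x
      have := tsum_path_succ K N x (fun _ => 1)
      simp only [mul_one] at this
      rw [this]
      calc ∑' s : S, K x s * ∑' q : Fin (N+1) → S, W K N s q
          = ∑' s : S, K x s := by
            refine tsum_congr fun s => ?_
            rw [ih s, mul_one]
        _ = 1 := (K x).tsum_coe

lemma sumW_end (h : S → ℝ≥0∞) : ∀ (N : ℕ) (x : S),
    ∑' p : Fin (N+1) → S, W K N x p * h (p (Fin.last N)) = ∑' s, (stepDist K x N) s * h s := by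
  intro N
  induction N with
  | zero =>
      intro x
      have h0 : ∀ s : S, W K 0 x (fun _ : Fin 1 => s) * h s = pI (s = x) * h s := by
        intro s
        unfold W
        rw [Fin.prod_univ_zero, mul_one]
      calc ∑' p : Fin 1 → S, W K 0 x p * h (p (Fin.last 0))
          = ∑' s : S, W K 0 x ((Equiv.funUnique (Fin 1) S).symm s)
              * h (((Equiv.funUnique (Fin 1) S).symm s) (Fin.last 0)) :=
            ((Equiv.funUnique (Fin 1) S).symm.tsum_eq
              fun p => W K 0 x p * h (p (Fin.last 0))).symm
        _ = ∑' s : S, pI (s = x) * h s := tsum_congr fun s => h0 s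
        _ = pI (x = x) * h x :=
            tsum_eq_single x (fun s hs => by rw [pI_false hs, zero_mul])
        _ = ∑' s, (stepDist K x 0) s * h s := by
            rw [pI_true rfl, one_mul]
            have hsum : (∑' s, (stepDist K x 0) s * h s) = (stepDist K x 0) x * h x :=
              tsum_eq_single x (fun s hs => by
                show (PMF.pure x) s * h s = 0
                rw [PMF.pure_apply, if_neg hs, zero_mul])
            rw [hsum]
            show h x = (PMF.pure x) x * h x
            rw [PMF.pure_apply, if_pos rfl, one_mul]
  | succ N ih =>
      intro x
      have hG : ∀ q : Fin (N+1) → S,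
          h ((Fin.cons x q : Fin (N+2) → S) (Fin.last (N+1))) = h (q (Fin.last N)) := by
        intro q
        rw [← Fin.succ_last, Fin.cons_succ]
      calc ∑' p : Fin (N+2) → S, W K (N+1) x p * h (p (Fin.last (N+1)))
          = ∑' s : S, K x s * ∑' q : Fin (N+1) → S,
              W K N s q * h ((Fin.cons x q : Fin (N+2) → S) (Fin.last (N+1))) :=
            tsum_path_succ K N x (fun p => h (p (Fin.last (N+1))))
        _ = ∑' s : S, K x s * ∑' u, (stepDist K s N) u * h u := by
            refine tsum_congr fun s => ?_
            rw [show (∑' q : Fin (N+1) → S,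
                W K N s q * h ((Fin.cons x q : Fin (N+2) → S) (Fin.last (N+1))))
              = ∑' q : Fin (N+1) → S, W K N s q * h (q (Fin.last N)) from
                tsum_congr fun q => by rw [hG q], ih s]
        _ = ∑' (s : S) (u : S), K x s * ((stepDist K s N) u * h u) := by
            refine tsum_congr fun s => ?_
            exact ENNReal.tsum_mul_left.symm
        _ = ∑' (u : S) (s : S), K x s * (stepDist K s N) u * h u := by
            rw [ENNReal.tsum_comm]
            exact tsum_congr fun u => tsum_congr fun s => by ring
        _ = ∑' u, (stepDist K x (N+1)) u * h u := by
            refine tsum_congr fun u => ?_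
            rw [stepDist_succ_front, PMF.bind_apply]
            rw [← ENNReal.tsum_mul_right]

def hits (bad : ℕ → Set S) {N : ℕ} (p : Fin (N+1) → S) : Prop :=
  ∃ i : Fin (N+1), p i ∈ bad i.val

lemma hits_cons (bad : ℕ → Set S) {N : ℕ} (z : S) (q : Fin (N+1) → S) :
    hits bad (Fin.cons z q : Fin (N+2) → S) ↔ z ∈ bad 0 ∨ hits (fun m => bad (m+1)) q := by
  unfold hits
  rw [Fin.exists_fin_succ]
  constructor
  · rintro (h0 | ⟨i, hi⟩)
    · left; exact h0
    · right; exact ⟨i, by simpa [Fin.cons_succ, Fin.val_succ] using hi⟩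
  · rintro (h0 | ⟨i, hi⟩)
    · left; exact h0
    · right; exact ⟨i, by simpa [Fin.cons_succ, Fin.val_succ] using hi⟩

lemma W_pI_of_mem {N : ℕ} {x : S} {bad : ℕ → Set S} (hx : x ∈ bad 0)
    (p : Fin (N+1) → S) : W K N x p * pI (hits bad p) = W K N x p := by
  by_cases h0 : p 0 = x
  · have hh : hits bad p := ⟨0, by rw [h0]; exact hx⟩
    rw [pI_true hh, mul_one]
  · rw [W_off K h0, zero_mul]

lemma W_pI_zero_of_not_mem {x : S} {bad : ℕ → Set S} (hx : x ∉ bad 0)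
    (p : Fin 1 → S) : W K 0 x p * pI (hits bad p) = 0 := by
  by_cases h0 : p 0 = x
  · have hnh : ¬ hits bad p := by
      rintro ⟨i, hi⟩
      have hi0 : i = 0 := Fin.ext (by omega)
      rw [hi0, h0] at hi
      exact hx hi
    rw [pI_false hnh, mul_zero]
  · rw [W_off K h0, zero_mul]

lemma hitsum_of_mem {N : ℕ} {x : S} {bad : ℕ → Set S} (hx : x ∈ bad 0) :
    (∑' p : Fin (N+1) → S, W K N x p * pI (hits bad p)) = 1 := by
  calc (∑' p : Fin (N+1) → S, W K N x p * pI (hits bad p))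
      = ∑' p : Fin (N+1) → S, W K N x p := tsum_congr fun p => W_pI_of_mem K hx p
    _ = 1 := sumW K N x

lemma hitsum_end_of_mem {N : ℕ} {x : S} {bad : ℕ → Set S} (hx : x ∈ bad 0) (h : S → ℝ≥0∞) :
    (∑' p : Fin (N+1) → S, W K N x p * pI (hits bad p) * h (p (Fin.last N)))
      = ∑' u, (stepDist K x N) u * h u := by
  calc (∑' p : Fin (N+1) → S, W K N x p * pI (hits bad p) * h (p (Fin.last N)))
      = ∑' p : Fin (N+1) → S, W K N x p * h (p (Fin.last N)) :=
        tsum_congr fun p => by rw [W_pI_of_mem K hx p]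
    _ = ∑' u, (stepDist K x N) u * h u := sumW_end K h N x

lemma cons_pI_hits {bad : ℕ → Set S} {x : S} (hx : x ∉ bad 0) {N : ℕ} (q : Fin (N+1) → S) :
    pI (hits bad (Fin.cons x q : Fin (N+2) → S)) = pI (hits (fun m => bad (m+1)) q) :=
  pI_congr ((hits_cons bad x q).trans (or_iff_right hx))

lemma cons_last {N : ℕ} (x : S) (q : Fin (N+1) → S) :
    (Fin.cons x q : Fin (N+2) → S) (Fin.last (N+1)) = q (Fin.last N) := by
  rw [← Fin.succ_last, Fin.cons_succ]

lemma hitsum_succ (x : S) {N : ℕ} (bad : ℕ → Set S) (hx : x ∉ bad 0) (h : S → ℝ≥0∞) :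
    (∑' p : Fin (N+2) → S, W K (N+1) x p * pI (hits bad p) * h (p (Fin.last (N+1))))
      = ∑' s, K x s * ∑' q : Fin (N+1) → S,
          W K N s q * pI (hits (fun m => bad (m+1)) q) * h (q (Fin.last N)) := by
  calc (∑' p : Fin (N+2) → S, W K (N+1) x p * pI (hits bad p) * h (p (Fin.last (N+1))))
      = ∑' p : Fin (N+2) → S, W K (N+1) x p * (pI (hits bad p) * h (p (Fin.last (N+1)))) :=
        tsum_congr fun p => by ring
    _ = ∑' s, K x s * ∑' q : Fin (N+1) → S, W K N s q *
          (pI (hits bad (Fin.cons x q : Fin (N+2) → S))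
            * h ((Fin.cons x q : Fin (N+2) → S) (Fin.last (N+1)))) :=
        tsum_path_succ K N x (fun p => pI (hits bad p) * h (p (Fin.last (N+1))))
    _ = ∑' s, K x s * ∑' q : Fin (N+1) → S,
          W K N s q * pI (hits (fun m => bad (m+1)) q) * h (q (Fin.last N)) := by
        refine tsum_congr fun s => congrArg (K x s * ·) (tsum_congr fun q => ?_)
        rw [cons_pI_hits hx q, cons_last]
        ring

lemma dip_bound (c : ℝ≥0∞) (h : S → ℝ≥0∞) :
    ∀ (N : ℕ) (x : S) (bad : ℕ → Set S),
      (∀ m, m ≤ N → ∀ s ∈ bad m, (∑' u, (stepDist K s (N - m)) u * h u) ≤ c) →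
      (∑' p : Fin (N+1) → S, W K N x p * pI (hits bad p) * h (p (Fin.last N)))
        ≤ c * ∑' p : Fin (N+1) → S, W K N x p * pI (hits bad p) := by
  intro N
  induction N with
  | zero =>
      intro x bad hc
      by_cases hx : x ∈ bad 0
      · rw [hitsum_end_of_mem K hx h, hitsum_of_mem K hx, mul_one]
        exact hc 0 (le_refl 0) x hx
      · have l : (∑' p : Fin 1 → S, W K 0 x p * pI (hits bad p) * h (p (Fin.last 0))) = 0 := by
          calc (∑' p : Fin 1 → S, W K 0 x p * pI (hits bad p) * h (p (Fin.last 0)))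
              = ∑' _p : Fin 1 → S, (0 : ℝ≥0∞) :=
                tsum_congr fun p => by rw [W_pI_zero_of_not_mem K hx p, zero_mul]
            _ = 0 := tsum_zero
        rw [l]
        exact zero_le
  | succ N ih =>
      intro x bad hc
      by_cases hx : x ∈ bad 0
      · rw [hitsum_end_of_mem K hx h, hitsum_of_mem K hx, mul_one]
        simpa using hc 0 (Nat.zero_le _) x hx
      · have hc' : ∀ m, m ≤ N → ∀ s ∈ (fun m => bad (m+1)) m,
            (∑' u, (stepDist K s (N - m)) u * h u) ≤ c := by
          intro m hm s hs
          have := hc (m+1) (Nat.succ_le_succ hm) s hs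
          simpa [Nat.succ_sub_succ] using this
        have hR : (∑' p : Fin (N+2) → S, W K (N+1) x p * pI (hits bad p))
            = ∑' s, K x s * ∑' q : Fin (N+1) → S,
                W K N s q * pI (hits (fun m => bad (m+1)) q) := by
          have := hitsum_succ K x (N := N) bad hx (fun _ => 1)
          simpa [mul_one] using this
        calc (∑' p : Fin (N+2) → S, W K (N+1) x p * pI (hits bad p) * h (p (Fin.last (N+1))))
            = ∑' s, K x s * ∑' q : Fin (N+1) → S,
                W K N s q * pI (hits (fun m => bad (m+1)) q) * h (q (Fin.last N)) :=
              hitsum_succ K x bad hx h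
          _ ≤ ∑' s, K x s * (c * ∑' q : Fin (N+1) → S,
                W K N s q * pI (hits (fun m => bad (m+1)) q)) :=
              ENNReal.tsum_le_tsum fun s =>
                mul_le_mul_right (ih s (fun m => bad (m+1)) hc') _
          _ = c * ∑' s, K x s * ∑' q : Fin (N+1) → S,
                W K N s q * pI (hits (fun m => bad (m+1)) q) := by
              rw [← ENNReal.tsum_mul_left]
              exact tsum_congr fun s => by ring
          _ = c * ∑' p : Fin (N+2) → S, W K (N+1) x p * pI (hits bad p) := by
              rw [hR]

lemma rise_bound (c : ℝ≥0∞) (h : S → ℝ≥0∞) :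
    ∀ (N : ℕ) (x : S) (bad : ℕ → Set S),
      (∀ m, m ≤ N → ∀ s ∈ bad m, c ≤ (∑' u, (stepDist K s (N - m)) u * h u)) →
      c * (∑' p : Fin (N+1) → S, W K N x p * pI (hits bad p))
        ≤ ∑' p : Fin (N+1) → S, W K N x p * pI (hits bad p) * h (p (Fin.last N)) := by
  intro N
  induction N with
  | zero =>
      intro x bad hc
      by_cases hx : x ∈ bad 0
      · rw [hitsum_end_of_mem K hx h, hitsum_of_mem K hx, mul_one]
        exact hc 0 (le_refl 0) x hx
      · have l : (∑' p : Fin 1 → S, W K 0 x p * pI (hits bad p)) = 0 := by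
          calc (∑' p : Fin 1 → S, W K 0 x p * pI (hits bad p))
              = ∑' _p : Fin 1 → S, (0 : ℝ≥0∞) :=
                tsum_congr fun p => by rw [W_pI_zero_of_not_mem K hx p]
            _ = 0 := tsum_zero
        rw [l, mul_zero]
        exact zero_le
  | succ N ih =>
      intro x bad hc
      by_cases hx : x ∈ bad 0
      · rw [hitsum_end_of_mem K hx h, hitsum_of_mem K hx, mul_one]
        simpa using hc 0 (Nat.zero_le _) x hx
      · have hc' : ∀ m, m ≤ N → ∀ s ∈ (fun m => bad (m+1)) m,
            c ≤ (∑' u, (stepDist K s (N - m)) u * h u) := by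
          intro m hm s hs
          have := hc (m+1) (Nat.succ_le_succ hm) s hs
          simpa [Nat.succ_sub_succ] using this
        have hR : (∑' p : Fin (N+2) → S, W K (N+1) x p * pI (hits bad p))
            = ∑' s, K x s * ∑' q : Fin (N+1) → S,
                W K N s q * pI (hits (fun m => bad (m+1)) q) := by
          have := hitsum_succ K x (N := N) bad hx (fun _ => 1)
          simpa [mul_one] using this
        calc c * (∑' p : Fin (N+2) → S, W K (N+1) x p * pI (hits bad p))
            = ∑' s, K x s * (c * ∑' q : Fin (N+1) → S,
                W K N s q * pI (hits (fun m => bad (m+1)) q)) := by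
              rw [hR, ← ENNReal.tsum_mul_left]
              exact tsum_congr fun s => by ring
          _ ≤ ∑' s, K x s * ∑' q : Fin (N+1) → S,
                W K N s q * pI (hits (fun m => bad (m+1)) q) * h (q (Fin.last N)) :=
              ENNReal.tsum_le_tsum fun s =>
                mul_le_mul_right (ih s (fun m => bad (m+1)) hc') _
          _ = ∑' p : Fin (N+2) → S, W K (N+1) x p * pI (hits bad p) * h (p (Fin.last (N+1))) :=
              (hitsum_succ K x bad hx h).symm

end Paths

section Coupling

variable [Countable S] (K : S → PMF S)

/-- extend a finite path to `ℕ → S` -/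
def ext {N : ℕ} (p : Fin (N+1) → S) : ℕ → S := fun i => p ⟨min i N, by omega⟩

lemma ext_le {N : ℕ} (p : Fin (N+1) → S) (i : ℕ) (hi : i ≤ N) :
    ext p i = p ⟨i, by omega⟩ := by
  unfold ext
  congr 1
  exact Fin.ext (by simp [Nat.min_eq_left hi])

lemma cyl_measure {Ω : Type} [MeasurableSpace Ω] (Pr : Measure Ω)
    {x : S} {X : ℕ → Ω → S} (hX : IsCopy Pr K x X) (N : ℕ) (p : Fin (N+1) → S) :
    Pr {ω | ∀ i ≤ N, X i ω = ext p i} = W K N x p := by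
  rw [hX N (ext p)]
  have h0 : ext p 0 = p 0 := by
    rw [ext_le p 0 (Nat.zero_le N)]
    congr 1
  have hprod : (∏ i ∈ Finset.range N, K (ext p i) (ext p (i+1)))
      = ∏ i : Fin N, K (p i.castSucc) (p i.succ) := by
    rw [← Fin.prod_univ_eq_prod_range (fun i => K (ext p i) (ext p (i+1))) N]
    refine Finset.prod_congr rfl fun i _ => ?_
    have h1 : ext p i.val = p i.castSucc := by
      rw [ext_le p i.val (le_of_lt i.isLt)]
      congr 1
    have h2 : ext p (i.val + 1) = p i.succ := by
      rw [ext_le p (i.val + 1) i.isLt]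
      congr 1
    rw [h1, h2]
  rw [h0, hprod]
  rfl

lemma tsum_subtype_pI {P : (Fin (N+1) → S) → Prop} (f : (Fin (N+1) → S) → ℝ≥0∞) :
    (∑' p : {p : Fin (N+1) → S // P p}, f p.val) = ∑' p : Fin (N+1) → S, f p * pI (P p) := by
  rw [show (∑' p : {p : Fin (N+1) → S // P p}, f p.val)
      = ∑' p : ({p : Fin (N+1) → S | P p} : Set _), f p.val from rfl]
  rw [tsum_subtype {p : Fin (N+1) → S | P p} f]
  refine tsum_congr fun p => ?_
  by_cases hp : P p
  · rw [Set.indicator_of_mem (show p ∈ {p | P p} from hp) f, pI_true hp, mul_one]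
  · rw [Set.indicator_of_notMem (show p ∉ {p | P p} from hp) f, pI_false hp, mul_zero]

lemma pmOf_eq_tsum_pI (μ : PMF S) (B : Set S) :
    pmOf μ B = ∑' u, μ u * pI (u ∈ B) := by
  rw [pmOf, tsum_subtype B (fun u => μ u)]
  refine tsum_congr fun u => ?_
  by_cases hu : u ∈ B
  · rw [Set.indicator_of_mem hu, pI_true hu, mul_one]
  · rw [Set.indicator_of_notMem hu, pI_false hu, mul_zero]

lemma event_le_hitsum {Ω : Type} [MeasurableSpace Ω] (Pr : Measure Ω)
    {x : S} {X : ℕ → Ω → S} (hX : IsCopy Pr K x X) (N : ℕ) (bad : ℕ → Set S) :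
    Pr {ω | ∃ m ≤ N, X m ω ∈ bad m}
      ≤ ∑' p : Fin (N+1) → S, W K N x p * pI (hits bad p) := by
  classical
  have hsub : {ω | ∃ m ≤ N, X m ω ∈ bad m}
      ⊆ ⋃ p : {p : Fin (N+1) → S // hits bad p}, {ω | ∀ i ≤ N, X i ω = ext p.val i} := by
    intro ω hω
    obtain ⟨m, hm, hmem⟩ := hω
    set p : Fin (N+1) → S := fun i => X i.val ω with hp
    have hhits : hits bad p := ⟨⟨m, by omega⟩, hmem⟩
    refine Set.mem_iUnion.mpr ⟨⟨p, hhits⟩, ?_⟩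
    intro i hi
    rw [ext_le p i hi]
  calc Pr {ω | ∃ m ≤ N, X m ω ∈ bad m}
      ≤ Pr (⋃ p : {p : Fin (N+1) → S // hits bad p}, {ω | ∀ i ≤ N, X i ω = ext p.val i}) :=
        measure_mono hsub
    _ ≤ ∑' p : {p : Fin (N+1) → S // hits bad p}, Pr {ω | ∀ i ≤ N, X i ω = ext p.val i} :=
        measure_iUnion_le _
    _ = ∑' p : {p : Fin (N+1) → S // hits bad p}, W K N x p.val :=
        tsum_congr fun p => cyl_measure K Pr hX N p.val
    _ = ∑' p : Fin (N+1) → S, W K N x p * pI (hits bad p) :=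
        tsum_subtype_pI _

lemma pair_core {Ω : Type} [MeasurableSpace Ω] (Pr : Measure Ω)
    [IsProbabilityMeasure Pr] (x y : S) (X Y : ℕ → Ω → S)
    (hX : IsCopy Pr K x X) (hY : IsCopy Pr K y Y) (N : ℕ) (α : ℝ)
    (hme : ENNReal.ofReal α ≤ Pr {ω | ∃ m ≤ N, X m ω = Y m ω}) (B : Set S) :
    ENNReal.ofReal α + 2 * pmOf (stepDist K x N) B
      ≤ 2 + 2 * pmOf (stepDist K y N) B := by
  classical
  set g : ℕ → S → ℝ≥0∞ := fun k s => pmOf (stepDist K s k) B with hg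
  set hB : S → ℝ≥0∞ := fun u => pI (u ∈ B) with hhB
  have hBle : ∀ u, hB u ≤ 1 := fun u => pI_le_one _
  have hgsum : ∀ k s, g k s = ∑' u, (stepDist K s k) u * hB u := fun k s =>
    pmOf_eq_tsum_pI _ B
  set badD : ℕ → Set S := fun m => {s | g (N - m) s < 2⁻¹} with hbadD
  set badR : ℕ → Set S := fun m => {s | 2⁻¹ ≤ g (N - m) s} with hbadR
  set D : ℝ≥0∞ := ∑' p : Fin (N+1) → S, W K N x p * pI (hits badD p) with hD
  set Dc : ℝ≥0∞ := ∑' p : Fin (N+1) → S, W K N x p * pI (¬ hits badD p) with hDc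
  set R : ℝ≥0∞ := ∑' p : Fin (N+1) → S, W K N y p * pI (hits badR p) with hR
  -- dip bound
  have hdip : (∑' p : Fin (N+1) → S, W K N x p * pI (hits badD p) * hB (p (Fin.last N)))
      ≤ 2⁻¹ * D := by
    refine dip_bound K 2⁻¹ hB N x badD ?_
    intro m hm s hs
    rw [← hgsum]
    exact le_of_lt hs
  have hrise : 2⁻¹ * R
      ≤ ∑' p : Fin (N+1) → S, W K N y p * pI (hits badR p) * hB (p (Fin.last N)) := by
    refine rise_bound K 2⁻¹ hB N y badR ?_
    intro m hm s hs
    rw [← hgsum]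
    exact hs
  -- split μB
  have hμB : g N x ≤ 2⁻¹ * D + Dc := by
    have hsplit : g N x
        = (∑' p : Fin (N+1) → S, W K N x p * pI (hits badD p) * hB (p (Fin.last N)))
          + ∑' p : Fin (N+1) → S, W K N x p * pI (¬ hits badD p) * hB (p (Fin.last N)) := by
      rw [hgsum, ← sumW_end K hB N x, ← ENNReal.tsum_add]
      refine tsum_congr fun p => ?_
      by_cases hp : hits badD p
      · rw [pI_true hp, pI_false (not_not_intro hp), mul_one, mul_zero, zero_mul, add_zero]
      · rw [pI_false hp, pI_true hp, mul_zero, zero_mul, mul_one, zero_add]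
    rw [hsplit]
    refine add_le_add hdip ?_
    refine ENNReal.tsum_le_tsum fun p => ?_
    calc W K N x p * pI (¬ hits badD p) * hB (p (Fin.last N))
        ≤ W K N x p * pI (¬ hits badD p) * 1 := mul_le_mul_right (hBle _) _
      _ = W K N x p * pI (¬ hits badD p) := mul_one _
  have hDDc : D + Dc = 1 := by
    rw [hD, hDc, ← ENNReal.tsum_add]
    rw [← sumW K N x]
    refine tsum_congr fun p => ?_
    by_cases hp : hits badD p
    · rw [pI_true hp, pI_false (not_not_intro hp), mul_one, mul_zero, add_zero]
    · rw [pI_false hp, pI_true hp, mul_zero, mul_one, zero_add]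
  have hνB : R ≤ 2 * g N y := by
    have h1 : (∑' p : Fin (N+1) → S, W K N y p * pI (hits badR p) * hB (p (Fin.last N)))
        ≤ g N y := by
      rw [hgsum, ← sumW_end K hB N y]
      refine ENNReal.tsum_le_tsum fun p => ?_
      calc W K N y p * pI (hits badR p) * hB (p (Fin.last N))
          ≤ W K N y p * 1 * hB (p (Fin.last N)) :=
            mul_le_mul_left (mul_le_mul_right (pI_le_one _) _) _
        _ = W K N y p * hB (p (Fin.last N)) := by rw [mul_one]
    have h2 : 2⁻¹ * R ≤ g N y := le_trans hrise h1
    calc R = 2 * (2⁻¹ * R) := by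
          rw [← mul_assoc, ENNReal.mul_inv_cancel (by norm_num) (by norm_num), one_mul]
      _ ≤ 2 * g N y := mul_le_mul_right h2 _
  -- probability bound
  have hmeet : {ω | ∃ m ≤ N, X m ω = Y m ω}
      ⊆ {ω | ∃ m ≤ N, X m ω ∈ badD m} ∪ {ω | ∃ m ≤ N, Y m ω ∈ badR m} := by
    intro ω hω
    obtain ⟨m, hm, heq⟩ := hω
    by_cases hlt : g (N - m) (X m ω) < 2⁻¹
    · exact Or.inl ⟨m, hm, hlt⟩
    · right
      exact ⟨m, hm, by rw [← heq]; exact not_lt.mp hlt⟩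
  have hprob : ENNReal.ofReal α ≤ D + R := by
    calc ENNReal.ofReal α ≤ Pr {ω | ∃ m ≤ N, X m ω = Y m ω} := hme
      _ ≤ Pr ({ω | ∃ m ≤ N, X m ω ∈ badD m} ∪ {ω | ∃ m ≤ N, Y m ω ∈ badR m}) :=
          measure_mono hmeet
      _ ≤ Pr {ω | ∃ m ≤ N, X m ω ∈ badD m} + Pr {ω | ∃ m ≤ N, Y m ω ∈ badR m} :=
          measure_union_le _ _
      _ ≤ D + R := add_le_add (event_le_hitsum K Pr hX N badD) (event_le_hitsum K Pr hY N badR)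
  -- combine
  calc ENNReal.ofReal α + 2 * pmOf (stepDist K x N) B
      ≤ (D + R) + 2 * (2⁻¹ * D + Dc) := add_le_add hprob (mul_le_mul_right hμB _)
    _ = 2 * (D + Dc) + R := by
        rw [mul_add, ← mul_assoc, ENNReal.mul_inv_cancel (by norm_num) (by norm_num), one_mul]
        ring
    _ = 2 + R := by rw [hDDc, mul_one]
    _ ≤ 2 + 2 * pmOf (stepDist K y N) B := add_le_add_right hνB 2

end Coupling

section Final

variable [Countable S] (K : S → PMF S)

lemma pair_tv (N : ℕ) (α : ℝ) (hα : α ∈ Set.Ioc (0 : ℝ) 1)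
    (hcoup : ∀ x y : S, ∃ (Ω : Type) (_ : MeasurableSpace Ω) (Pr : Measure Ω),
      IsProbabilityMeasure Pr ∧ ∃ X Y : ℕ → Ω → S, IsCopy Pr K x X ∧ IsCopy Pr K y Y ∧
        ENNReal.ofReal α ≤ Pr {ω | ∃ m ≤ N, X m ω = Y m ω})
    (x y : S) : tvDist (stepDist K x N) (stepDist K y N) ≤ 1 - α / 2 := by
  have key : ∀ a b : S, ∀ B : Set S,
      (pmOf (stepDist K a N) B).toReal - (pmOf (stepDist K b N) B).toReal ≤ 1 - α / 2 := by
    intro a b B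
    obtain ⟨Ω, mΩ, Pr, hPr, X, Y, hX, hY, hme⟩ := hcoup a b
    have h := pair_core K Pr a b X Y hX hY N α hme B
    have hne : (2 : ℝ≥0∞) + 2 * pmOf (stepDist K b N) B ≠ ⊤ :=
      ENNReal.add_ne_top.mpr ⟨by norm_num, ENNReal.mul_ne_top (by norm_num) (pmOf_ne_top _ _)⟩
    have hR := ENNReal.toReal_mono hne h
    rw [ENNReal.toReal_add ENNReal.ofReal_ne_top
          (ENNReal.mul_ne_top (by norm_num) (pmOf_ne_top _ _)),
        ENNReal.toReal_add (by norm_num)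
          (ENNReal.mul_ne_top (by norm_num) (pmOf_ne_top _ _)),
        ENNReal.toReal_mul, ENNReal.toReal_mul, ENNReal.toReal_ofReal hα.1.le] at hR
    norm_num at hR
    linarith
  have h0 : (0:ℝ) ≤ 1 - α / 2 := by have := hα.2; linarith
  refine tvDist_le _ _ h0 fun B => abs_le.mpr ⟨?_, key x y B⟩
  have := key y x B
  linarith

lemma step_le_pow (π : PMF S) (hπ : π.bind K = π) (N : ℕ) (β : ℝ) (hβ : 0 ≤ β)
    (hpair : ∀ s t : S, tvDist (stepDist K s N) (stepDist K t N) ≤ β) (x : S) :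
    ∀ k : ℕ, tvDist (stepDist K x (N * k)) π ≤ β ^ k := by
  have hπstat : ∀ m : ℕ, stepDistFrom K π m = π := by
    intro m
    induction m with
    | zero => rfl
    | succ m ih => rw [stepDistFrom, ih, hπ]
  intro k
  induction k with
  | zero => simpa using tvDist_le_one (stepDist K x (N * 0)) π
  | succ k ih =>
      have hstep : stepDist K x (N * (k+1)) = stepDistFrom K (stepDist K x (N * k)) N := by
        rw [stepDist_eq_from, stepDist_eq_from, show N * (k+1) = N * k + N by ring,
          stepDistFrom_add]
      have hπs : π = stepDistFrom K π N := (hπstat N).symm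
      calc tvDist (stepDist K x (N * (k+1))) π
          = tvDist (stepDistFrom K (stepDist K x (N * k)) N) (stepDistFrom K π N) := by
            rw [← hstep, ← hπs]
        _ ≤ β * tvDist (stepDist K x (N * k)) π := contract K N β hβ hpair _ _
        _ ≤ β * β ^ k := mul_le_mul_of_nonneg_left ih hβ
        _ = β ^ (k+1) := by rw [pow_succ]; ring

lemma pi_stationary (π : PMF S)
    (hconv : ∀ μ₀ : PMF S, Tendsto (fun m => tvDist (stepDistFrom K μ₀ m) π) atTop (𝓝 0)) :
    π.bind K = π := by
  have hmono : ∀ (μ ν : PMF S), tvDist (μ.bind K) (ν.bind K) ≤ tvDist μ ν := by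
    intro μ ν
    have h := contract K 1 1 zero_le_one (fun s t => tvDist_le_one _ _) μ ν
    rw [one_mul] at h
    have h1 : stepDistFrom K μ 1 = μ.bind K := rfl
    have h2 : stepDistFrom K ν 1 = ν.bind K := rfl
    rw [h1, h2] at h
    exact h
  have ha := hconv π
  have hb : ∀ m : ℕ, tvDist (π.bind K) π
      ≤ tvDist (stepDistFrom K π m) π + tvDist (stepDistFrom K π (m+1)) π := by
    intro m
    have h2 : tvDist (π.bind K) (stepDistFrom K π (m+1)) ≤ tvDist (stepDistFrom K π m) π := by
      have h3 := hmono π (stepDistFrom K π m)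
      have h4 : stepDistFrom K π (m+1) = (stepDistFrom K π m).bind K := rfl
      rw [h4]
      exact h3.trans_eq (tvDist_symm _ _)
    calc tvDist (π.bind K) π
        ≤ tvDist (π.bind K) (stepDistFrom K π (m+1)) + tvDist (stepDistFrom K π (m+1)) π :=
          tvDist_triangle _ _ _
      _ ≤ tvDist (stepDistFrom K π m) π + tvDist (stepDistFrom K π (m+1)) π :=
          add_le_add_left h2 _
  have hshift : Tendsto (fun m => tvDist (stepDistFrom K π (m+1)) π) atTop (𝓝 0) :=
    ha.comp (tendsto_add_atTop_nat 1)
  have hlim : Tendsto (fun m => tvDist (stepDistFrom K π m) π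
      + tvDist (stepDistFrom K π (m+1)) π) atTop (𝓝 0) := by
    simpa using ha.add hshift
  have hle : tvDist (π.bind K) π ≤ 0 := ge_of_tendsto' hlim hb
  exact tvDist_eq_zero (le_antisymm hle (tvDist_nonneg _ _))

end Final

end MixAux

/-- If the distribution of the chain converges to `π` in total variation irrespective of the
starting distribution, and for some `α ∈ (0,1]` and `n` every pair of states admits a coupling
whose first meeting time `τ` satisfies `P(τ ≤ n) ≥ α`, then
`t_mix ≤ n·⌈log(1/4)/log(1 − α/2)⌉`. -/
theorem mixing_time_bound_of_couplings {S : Type*} [Countable S] (K : S → PMF S) (π : PMF S)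
    (hconv : ∀ μ₀ : PMF S,
      Tendsto (fun m => tvDist (stepDistFrom K μ₀ m) π) atTop (𝓝 0))
    (α : ℝ) (hα : α ∈ Set.Ioc (0 : ℝ) 1) (n : ℕ)
    (hcoup : ∀ x y : S, ∃ (Ω : Type) (_ : MeasurableSpace Ω) (Pr : Measure Ω),
      IsProbabilityMeasure Pr ∧ ∃ X Y : ℕ → Ω → S, IsCopy Pr K x X ∧ IsCopy Pr K y Y ∧
        ENNReal.ofReal α ≤ Pr {ω | ∃ m ≤ n, X m ω = Y m ω}) :
    sInf {m : ℕ | (⨆ x : S, tvDist (stepDist K x m) π) ≤ 1 / 4}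
      ≤ n * ⌈Real.log (1 / 4) / Real.log (1 - α / 2)⌉₊ := by
  classical
  obtain ⟨hα0, hα1⟩ := hα
  have hβ0 : (0:ℝ) ≤ 1 - α / 2 := by linarith
  have hβpos : (0:ℝ) < 1 - α / 2 := by linarith
  have hβ1 : 1 - α / 2 < 1 := by linarith
  have hπ : π.bind K = π := MixAux.pi_stationary K π hconv
  have hpair : ∀ s t : S, tvDist (stepDist K s n) (stepDist K t n) ≤ 1 - α / 2 :=
    MixAux.pair_tv K n α ⟨hα0, hα1⟩ hcoup
  set k₀ : ℕ := ⌈Real.log (1 / 4) / Real.log (1 - α / 2)⌉₊ with hk₀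
  have hβk : (1 - α / 2) ^ k₀ ≤ 1 / 4 := by
    have hlogβ : Real.log (1 - α / 2) < 0 := Real.log_neg hβpos hβ1
    have hk : Real.log (1/4) / Real.log (1 - α / 2) ≤ (k₀ : ℝ) := Nat.le_ceil _
    have h2 : (k₀ : ℝ) * Real.log (1 - α / 2) ≤ Real.log (1/4) := by
      have h3 := mul_le_mul_of_nonpos_right hk (le_of_lt hlogβ)
      rw [div_mul_cancel₀ _ (ne_of_lt hlogβ)] at h3
      linarith
    have h3 : Real.log ((1 - α / 2) ^ k₀) ≤ Real.log (1/4) := by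
      rw [Real.log_pow]
      exact_mod_cast h2
    have h4 := (Real.log_le_log_iff (pow_pos hβpos k₀) (by norm_num)).mp h3
    exact h4
  have hd : ∀ x : S, tvDist (stepDist K x (n * k₀)) π ≤ 1/4 := fun x =>
    le_trans (MixAux.step_le_pow K π hπ n (1 - α / 2) hβ0 hpair x k₀) hβk
  have hmem : n * k₀ ∈ {m : ℕ | (⨆ x : S, tvDist (stepDist K x m) π) ≤ 1 / 4} :=
    Real.iSup_le (fun x => hd x) (by norm_num)
  exact Nat.sInf_le hmem
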